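/- Let $X$ be a metric space with more than one point, $2 \leq m \leq \#X$, and $\lambda > 0$. Then $2 d_{GH}(\lambda\Delta_m, X) = \inf_{D} \max\{\operatorname{diam} D, \lambda - \alpha(D), \operatorname{diam} X - \lambda\}$, where the infimum ranges over all partitions $D = \{X_i\}$ of $X$ into $m$ nonempty subsets. -/

import Mathlib

open Real

/-- The simplex `λΔₘ`: metric on `Fin m` with all nonzero distances `λ`. -/
noncomputable def simplexSpace (lam : ℝ) (hlam : 0 < lam) (m : ℕ) : MetricSpace (Fin m) :=
  MetricSpace.ofDistTopology (fun x y => if x = y then 0 else lam)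
    (by simp) (fun x y => by simp [eq_comm])
    (by intro x y z; split_ifs <;> simp_all <;> linarith)
    (fun s => ⟨fun _ x hx => ⟨lam, hlam, fun y hy => by
        by_cases h : x = y
        · exact h ▸ hx
        · simp only [if_neg h] at hy; exact absurd hy (lt_irrefl _)⟩,
      fun _ => isOpen_discrete s⟩)
    (fun x y h => by by_contra hxy; simp only [if_neg hxy] at h; exact hlam.ne' h)

/-- `R ⊆ X × Y` is a correspondence. -/
def IsCorr {X Y : Type*} (R : Set (X × Y)) : Prop :=
  (∀ x, ∃ y, (x, y) ∈ R) ∧ (∀ y, ∃ x, (x, y) ∈ R)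

/-- Distortion of a relation between metric spaces. -/
noncomputable def corrDis {X Y : Type*} [MetricSpace X] [MetricSpace Y]
    (R : Set (X × Y)) : ℝ :=
  sSup {r | ∃ p ∈ R, ∃ q ∈ R, r = |dist p.1 q.1 - dist p.2 q.2|}

/-- Gromov–Hausdorff distance via correspondences. -/
noncomputable def ghCorrDist (X Y : Type*) [MetricSpace X] [MetricSpace Y] : ℝ :=
  (1 / 2) * sInf {r | ∃ R : Set (X × Y), IsCorr R ∧ r = corrDis R}

lemma exists_refine_surj : ∀ (m : ℕ), 1 ≤ m → ∀ (X : Type*) [Fintype X] (Y : Type*) (f : X → Y),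
    Set.ncard (Set.range f) ≤ m → m ≤ Fintype.card X →
    ∃ g : X → Fin m, Function.Surjective g ∧ ∀ x y, g x = g y → f x = f y := by
  intro m
  induction m with
  | zero => omega
  | succ m ih =>
    intro _ X _ Y f himg hcard
    classical
    letI : Fintype (Set.range f) := (Set.finite_range f).fintype
    have hcardrange : Fintype.card (Set.range f) = Set.ncard (Set.range f) := by
      rw [Set.ncard_eq_toFinset_card', Set.toFinset_card]
    by_cases heq : Set.ncard (Set.range f) = m + 1
    · have e : Set.range f ≃ Fin (m + 1) :=
        Fintype.equivFinOfCardEq (by rw [hcardrange, heq])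
      refine ⟨fun x => e ⟨f x, Set.mem_range_self x⟩, ?_, ?_⟩
      · intro i
        obtain ⟨⟨y, hy⟩, he⟩ := e.surjective i
        obtain ⟨x, rfl⟩ := hy
        exact ⟨x, he⟩
      · intro x y hxy
        have := e.injective hxy
        simpa using congrArg Subtype.val this
    · have himg' : Set.ncard (Set.range f) ≤ m := by omega
      rcases Nat.eq_zero_or_pos m with hm0 | hm1
      · exfalso
        subst hm0
        have : Nonempty X := Fintype.card_pos_iff.mp (by omega)
        obtain ⟨x⟩ := this
        have h1 : (Set.range f).Nonempty := ⟨f x, x, rfl⟩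
        have := Set.ncard_pos (Set.finite_range f) |>.mpr h1
        omega
      · have hne : Nonempty X := Fintype.card_pos_iff.mp (by omega)
        obtain ⟨x0⟩ := hne
        have hcard' : m ≤ Fintype.card {x : X // x ≠ x0} := by
          have : Fintype.card {x : X // x ≠ x0} = Fintype.card X - 1 := by
            simp [Fintype.card_subtype_compl]
          omega
        have himg'' : Set.ncard (Set.range fun x : {x : X // x ≠ x0} => f x.1) ≤ m := by
          refine le_trans (Set.ncard_le_ncard ?_ (Set.finite_range f)) himg'
          rintro y ⟨x, rfl⟩
          exact ⟨x.1, rfl⟩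
        obtain ⟨g', hsurj, href⟩ := ih hm1 {x : X // x ≠ x0} Y (fun x => f x.1) himg'' hcard'
        refine ⟨fun x => if h : x = x0 then Fin.last m else (g' ⟨x, h⟩).castSucc, ?_, ?_⟩
        · intro i
          rcases Fin.eq_castSucc_or_eq_last i with ⟨j, rfl⟩ | rfl
          · obtain ⟨x, hx⟩ := hsurj j
            exact ⟨x.1, by simp [x.2, hx]⟩
          · exact ⟨x0, by simp⟩
        · intro x y hxy
          by_cases hx : x = x0 <;> by_cases hy : y = x0
          · rw [hx, hy]
          · exfalso
            simp only [hx, dif_pos, dif_neg hy] at hxy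
            exact (Fin.castSucc_lt_last (g' ⟨y, hy⟩)).ne' hxy
          · exfalso
            simp only [hy, dif_pos, dif_neg hx] at hxy
            exact (Fin.castSucc_lt_last (g' ⟨x, hx⟩)).ne hxy
          · simp only [dif_neg hx, dif_neg hy] at hxy
            exact href ⟨x, hx⟩ ⟨y, hy⟩ (Fin.castSucc_injective m hxy)

theorem stmt13 (X : Type*) [MetricSpace X] [Finite X] (hX : 1 < Nat.card X)
    (m : ℕ) (hm : 2 ≤ m) (hmX : m ≤ Nat.card X) (lam : ℝ) (hlam : 0 < lam) :
    2 * @ghCorrDist (Fin m) X (simplexSpace lam hlam m) _ =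
      sInf {r | ∃ D : Fin m → Set X, (∀ i, (D i).Nonempty) ∧
        Pairwise (Function.onFun Disjoint D) ∧ (⋃ i, D i) = Set.univ ∧
        r = max (⨆ i, Metric.diam (D i))
            (max (lam - sInf {d | ∃ i j, i ≠ j ∧ ∃ a ∈ D i, ∃ b ∈ D j, d = dist a b})
                 (Metric.diam (Set.univ : Set X) - lam))} := by
  classical
  letI : MetricSpace (Fin m) := simplexSpace lam hlam m
  have hd : ∀ i j : Fin m, dist i j = if i = j then 0 else lam := fun i j => rfl
  cases nonempty_fintype X
  have hXcard : Fintype.card X = Nat.card X := Nat.card_eq_fintype_card.symm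
  have hXne : Nonempty X := Fintype.card_pos_iff.mp (by omega)
  obtain ⟨x₀⟩ := hXne
  set Δ := Metric.diam (Set.univ : Set X) with hΔdef
  have hΔ0 : 0 ≤ Δ := Metric.diam_nonneg
  have hdistle : ∀ x y : X, dist x y ≤ Δ := fun x y =>
    Metric.dist_le_diam_of_mem Set.finite_univ.isBounded trivial trivial
  have hsdist : ∀ i j : Fin m, dist i j ≤ lam := by
    intro i j; rw [hd]; split_ifs <;> linarith
  have hsdist0 : ∀ i j : Fin m, 0 ≤ dist i j := fun i j => dist_nonneg
  set A := {r | ∃ R : Set (Fin m × X), IsCorr R ∧ r = corrDis R} with hAdef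
  set B := {r | ∃ D : Fin m → Set X, (∀ i, (D i).Nonempty) ∧
        Pairwise (Function.onFun Disjoint D) ∧ (⋃ i, D i) = Set.univ ∧
        r = max (⨆ i, Metric.diam (D i))
            (max (lam - sInf {d | ∃ i j, i ≠ j ∧ ∃ a ∈ D i, ∃ b ∈ D j, d = dist a b})
                 (Metric.diam (Set.univ : Set X) - lam))} with hBdef
  -- basic facts about distortion sets
  have hSbdd : ∀ R : Set (Fin m × X), BddAbove
      {r | ∃ p ∈ R, ∃ q ∈ R, r = |dist p.1 q.1 - dist p.2 q.2|} := by
    intro R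
    refine ⟨lam + Δ, ?_⟩
    rintro r ⟨p, hp, q, hq, rfl⟩
    have h1 := hsdist p.1 q.1
    have h2 := hdistle p.2 q.2
    have h3 := hsdist0 p.1 q.1
    have h4 : (0:ℝ) ≤ dist p.2 q.2 := dist_nonneg
    rw [abs_le]; constructor <;> linarith
  have hpair : ∀ R : Set (Fin m × X), ∀ p ∈ R, ∀ q ∈ R,
      |dist p.1 q.1 - dist p.2 q.2| ≤ corrDis R := by
    intro R p hp q hq
    exact le_csSup (hSbdd R) ⟨p, hp, q, hq, rfl⟩
  have hm0 : 0 < m := by omega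
  have hm1' : 1 < m := by omega
  set i0 : Fin m := ⟨0, hm0⟩ with hi0
  have hcorr0 : ∀ R : Set (Fin m × X), IsCorr R → 0 ≤ corrDis R := by
    intro R hR
    obtain ⟨x, hx⟩ := hR.1 i0
    have := hpair R (i0, x) hx (i0, x) hx
    simpa using this
  -- Δ - lam ≤ corrDis R for every correspondence
  have hΔlam : ∀ R : Set (Fin m × X), IsCorr R → Δ - lam ≤ corrDis R := by
    intro R hR
    have h0 := hcorr0 R hR
    have : Δ ≤ corrDis R + lam := by
      apply Metric.diam_le_of_forall_dist_le (by linarith)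
      intro x _ y _
      obtain ⟨i, hi⟩ := hR.2 x
      obtain ⟨j, hj⟩ := hR.2 y
      have hp := hpair R (i, x) hi (j, y) hj
      simp only at hp
      rw [hd] at hp
      by_cases hij : i = j
      · rw [if_pos hij] at hp
        have := abs_le.mp hp
        have h4 : (0:ℝ) ≤ dist x y := dist_nonneg
        simp at this
        linarith [this.2, abs_nonneg (0 - dist x y)]
      · rw [if_neg hij] at hp
        have := abs_le.mp hp
        linarith [this.1]
    linarith
  -- nonemptiness of A
  have hAne : A.Nonempty := by
    refine ⟨corrDis (Set.univ : Set (Fin m × X)), Set.univ, ⟨?_, ?_⟩, rfl⟩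
    · intro i; exact ⟨x₀, trivial⟩
    · intro y; exact ⟨i0, trivial⟩
  -- bddBelow of A
  have hAbdd : BddBelow A := by
    refine ⟨0, ?_⟩
    rintro a ⟨R, hR, rfl⟩
    exact hcorr0 R hR
  -- bddBelow of B
  have hBbdd : BddBelow B := by
    refine ⟨0, ?_⟩
    rintro b ⟨D, hne, hdisj, hcov, rfl⟩
    have : (0:ℝ) ≤ ⨆ i, Metric.diam (D i) :=
      Real.iSup_nonneg fun i => Metric.diam_nonneg
    exact le_trans this (le_max_left _ _)
  -- a partition from a surjection onto Fin m, whose fibers refine a given map into R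
  -- (used to build elements of B)
  have hmkB : ∀ g : X → Fin m, Function.Surjective g →
      (max (⨆ i, Metric.diam ({x | g x = i} : Set X))
            (max (lam - sInf {d | ∃ i j, i ≠ j ∧ ∃ a ∈ ({x | g x = i} : Set X),
                    ∃ b ∈ ({x | g x = j} : Set X), d = dist a b}) (Δ - lam))) ∈ B := by
    intro g hgs
    refine ⟨fun i => {x | g x = i}, fun i => hgs i, ?_, ?_, rfl⟩
    · intro i j hij
      simp only [Function.onFun, Set.disjoint_left]
      rintro x (hx : g x = i) (hx' : g x = j)
      exact hij (hx ▸ hx')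
    · ext x; simp
  -- cross-set nonemptiness for any partition with nonempty parts
  set j1 : Fin m := ⟨1, hm1'⟩ with hj1
  have hij01 : i0 ≠ j1 := by
    rw [hi0, hj1]
    exact Fin.ne_of_val_ne (by norm_num)
  have hcrossne : ∀ D : Fin m → Set X, (∀ i, (D i).Nonempty) →
      {d | ∃ i j, i ≠ j ∧ ∃ a ∈ D i, ∃ b ∈ D j, d = dist a b}.Nonempty := by
    intro D hne
    obtain ⟨a, ha⟩ := hne i0
    obtain ⟨b, hb⟩ := hne j1
    exact ⟨dist a b, i0, j1, hij01, a, ha, b, hb, rfl⟩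
  have hcross0 : ∀ D : Fin m → Set X,
      ∀ d ∈ {d | ∃ i j, i ≠ j ∧ ∃ a ∈ D i, ∃ b ∈ D j, d = dist a b}, (0:ℝ) ≤ d := by
    rintro D d ⟨i, j, hij, a, ha, b, hb, rfl⟩
    exact dist_nonneg
  -- Direction 1 : sInf A ≤ sInf B
  have hdir1 : sInf A ≤ sInf B := by
    apply le_csInf
    · -- B nonempty
      have hrng : Set.ncard (Set.range fun _ : X => ()) ≤ m := by
        refine le_trans (Set.ncard_le_ncard (Set.subset_univ _) Set.finite_univ) ?_
        rw [Set.ncard_univ, Nat.card_unique]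
        omega
      obtain ⟨g, hgs, -⟩ := exists_refine_surj m (by omega) X Unit (fun _ => ()) hrng (by omega)
      exact ⟨_, hmkB g hgs⟩

    · rintro b ⟨D, hne, hdisj, hcov, hbeq⟩
      set R : Set (Fin m × X) := {p | p.2 ∈ D p.1} with hRdef
      have hRcorr : IsCorr R := by
        constructor
        · intro i; obtain ⟨x, hx⟩ := hne i; exact ⟨x, hx⟩
        · intro x
          have : x ∈ ⋃ i, D i := hcov ▸ Set.mem_univ x
          obtain ⟨_, ⟨i, rfl⟩, hx⟩ := this
          exact ⟨i, hx⟩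
      have hble : corrDis R ≤ b := by
        rw [hbeq]
        apply Real.sSup_le
        · rintro r ⟨⟨i, a⟩, hp, ⟨j, c⟩, hq, rfl⟩
          simp only at *
          rw [hd]
          by_cases hij : i = j
          · rw [if_pos hij]
            rw [show |(0:ℝ) - dist a c| = dist a c by rw [abs_sub_comm]; simp [abs_of_nonneg dist_nonneg]]
            have h1 : dist a c ≤ Metric.diam (D i) := by
              apply Metric.dist_le_diam_of_mem (Set.toFinite (D i)).isBounded hp
              rw [hij]; exact hq
            have h2 : Metric.diam (D i) ≤ ⨆ k, Metric.diam (D k) :=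
              le_ciSup (f := fun k => Metric.diam (D k))
                (Set.Finite.bddAbove (Set.finite_range _)) i
            exact le_trans (le_trans h1 h2) (le_max_left _ _)
          · rw [if_neg hij]
            rcases abs_cases (lam - dist a c) with ⟨heq, -⟩ | ⟨heq, -⟩
            · rw [heq]
              have hsle : sInf {d | ∃ i' j', i' ≠ j' ∧ ∃ a' ∈ D i', ∃ b' ∈ D j', d = dist a' b'}
                  ≤ dist a c :=
                csInf_le ⟨0, fun d hd' => hcross0 D d hd'⟩ ⟨i, j, hij, a, hp, c, hq, rfl⟩
              refine le_trans ?_ (le_trans (le_max_left _ _) (le_max_right _ _))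
              linarith
            · rw [heq]
              have := hdistle a c
              refine le_trans ?_ (le_trans (le_max_right _ _) (le_max_right _ _))
              simp only [hΔdef] at *
              linarith
        · -- nonneg
          have : (0:ℝ) ≤ ⨆ i, Metric.diam (D i) :=
            Real.iSup_nonneg fun i => Metric.diam_nonneg
          exact le_trans this (le_max_left _ _)
      exact le_trans (csInf_le hAbdd ⟨R, hRcorr, rfl⟩) hble
  -- Direction 2 : sInf B ≤ sInf A
  have hdir2 : sInf B ≤ sInf A := by
    apply le_csInf hAne
    rintro a ⟨R, hR, rfl⟩
    set r := corrDis R with hrdef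
    have hr0 : 0 ≤ r := hcorr0 R hR
    have hΔr : Δ - lam ≤ r := hΔlam R hR
    have key : ∀ i x j y, (i, x) ∈ R → (j, y) ∈ R → |dist i j - dist x y| ≤ r := by
      intro i x j y hi hj
      exact hpair R (i, x) hi (j, y) hj
    by_cases hrl : lam ≤ r
    · -- easy case : refine any system of choices
      choose f hf using hR.2
      have himg : Set.ncard (Set.range f) ≤ m := by
        refine le_trans (Set.ncard_le_ncard (Set.subset_univ _) Set.finite_univ) ?_
        rw [Set.ncard_univ, Nat.card_eq_fintype_card, Fintype.card_fin]
      obtain ⟨g, hgs, hgr⟩ := exists_refine_surj m (by omega) X (Fin m) f himg (by omega)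
      refine le_trans (csInf_le hBbdd (hmkB g hgs)) ?_
      apply max_le
      · apply Real.iSup_le _ hr0
        intro i
        apply Metric.diam_le_of_forall_dist_le hr0
        rintro x (hx : g x = i) y (hy : g y = i)
        have hfxy : f x = f y := hgr x y (hx.trans hy.symm)
        have := key (f x) x (f x) y (hf x) (hfxy ▸ hf y)
        rw [hd, if_pos rfl] at this
        rw [abs_sub_comm] at this
        simpa [abs_of_nonneg dist_nonneg] using this
      · apply max_le _ (by linarith)
        have hs0 : (0:ℝ) ≤ sInf {d | ∃ i j, i ≠ j ∧ ∃ a ∈ ({x | g x = i} : Set X),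
            ∃ b ∈ ({x | g x = j} : Set X), d = dist a b} :=
          le_csInf (hcrossne _ fun i => hgs i) (hcross0 _)
        linarith
    · -- rigid case : each point is related to a unique index
      push_neg at hrl
      have huniq : ∀ i x j, (i, x) ∈ R → (j, x) ∈ R → i = j := by
        intro i x j hi hj
        by_contra hij
        have := key i x j x hi hj
        rw [hd, if_neg hij, dist_self, sub_zero, abs_of_pos hlam] at this
        linarith
      choose f hf using hR.2
      have hgs : Function.Surjective f := by
        intro i
        obtain ⟨x, hx⟩ := hR.1 i
        exact ⟨x, huniq (f x) x i (hf x) hx⟩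
      refine le_trans (csInf_le hBbdd (hmkB f hgs)) ?_
      apply max_le
      · apply Real.iSup_le _ hr0
        intro i
        apply Metric.diam_le_of_forall_dist_le hr0
        rintro x (hx : f x = i) y (hy : f y = i)
        have := key (f x) x (f y) y (hf x) (hf y)
        rw [hd, if_pos (hx.trans hy.symm)] at this
        rw [abs_sub_comm] at this
        simpa [abs_of_nonneg dist_nonneg] using this
      · apply max_le _ (by linarith)
        have hs : lam - r ≤ sInf {d | ∃ i j, i ≠ j ∧ ∃ a ∈ ({x | f x = i} : Set X),
            ∃ b ∈ ({x | f x = j} : Set X), d = dist a b} := by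
          apply le_csInf (hcrossne _ fun i => hgs i)
          rintro d ⟨i, j, hij, a, (ha : f a = i), b, (hb : f b = j), rfl⟩
          have := key (f a) a (f b) b (hf a) (hf b)
          rw [hd, if_neg (by rw [ha, hb]; exact hij)] at this
          have := abs_le.mp this
          linarith [this.1]
        linarith
  -- conclude
  have hAB : sInf A = sInf B := le_antisymm hdir1 hdir2
  show 2 * ((1/2) * sInf A) = sInf B
  rw [← mul_assoc]
  norm_num
  exact hAB
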